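/- arXiv:2002.10040 — 5 statements merged into one kernel-verified Lean document; each statement's English description precedes it below -/
import Mathlib

section
/- Let G be a cyclic graph: vertices v₁,...,v_n arranged in a single cycle, with edge i joining v_i to v_{i+1} (indices mod n), edge signs σ_i and connections φ_i in a commutative ring R. Then det(L_G) = σ (2 − φ − φ^{-1}), where σ = σ₁···σ_n and φ = φ₁···φ_n is the connection of the cycle. -/
/-- A finite signed graph with edge "connections" (holonomies) valued in the
units of a commutative ring `R`.  Each undirected edge is recorded once, with a
chosen direction from `src` to `tgt`; its reverse has the same sign and inverse
connection, and this symmetrization is built into the adjacency matrix. -/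
structure CGraph (R : Type) [CommRing R] where
  V : Type
  E : Type
  [fV : Fintype V]
  [dV : DecidableEq V]
  [fE : Fintype E]
  [dE : DecidableEq E]
  src : E → V
  tgt : E → V
  sign : E → R
  conn : E → Rˣ

attribute [instance] CGraph.fV CGraph.dV CGraph.fE CGraph.dE

namespace CGraph

variable {R : Type} [CommRing R]

/-- The adjacency matrix: the `(i,j)` entry is the sum of `σ_e φ_e` over
directed edges from `i` to `j`. -/
def adj (G : CGraph R) : Matrix G.V G.V R := fun i j =>
  ∑ e : G.E,
    ((if G.src e = i ∧ G.tgt e = j then G.sign e * (G.conn e : R) else 0)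
      + (if G.src e = j ∧ G.tgt e = i then G.sign e * ((G.conn e)⁻¹ : Rˣ) else 0))

/-- The signed degree of a vertex (loops counted twice). -/
def deg (G : CGraph R) : G.V → R := fun i =>
  ∑ e : G.E, G.sign e *
    ((if G.src e = i then 1 else 0) + (if G.tgt e = i then 1 else 0))

/-- The Laplacian matrix of `G`, normalized (as in Forman's formula) so that
its determinant is the Laplacian polynomial. -/
def lap (G : CGraph R) : Matrix G.V G.V R := Matrix.diagonal G.deg - G.adj

/-- The Laplacian determinant of `G`. -/
def lapDet (G : CGraph R) : R := G.lap.det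

end CGraph

/-- The cyclic graph with `n + 1` vertices `v₀, …, v_n` arranged in a single
cycle, edge `i` joining `vᵢ` to `v_{i+1}` (indices mod `n + 1`), with signs `σ`
and connections `φ`. -/
def cyclicGraph (R : Type) [CommRing R] (n : ℕ) (σ : Fin (n + 1) → R)
    (φ : Fin (n + 1) → Rˣ) : CGraph R where
  V := Fin (n + 1)
  E := Fin (n + 1)
  src i := i
  tgt i := i + 1
  sign := σ
  conn := φ

open Matrix Finset in
/-- Determinant of the "cyclic bidiagonal" matrix `1 - shift·diag(w)`. -/
theorem det_cyclicBidiag {R : Type} [CommRing R] (n : ℕ) (w : Fin (n + 1) → R) :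
    (Matrix.of fun i e : Fin (n + 1) =>
        (if e = i then (1 : R) else 0) - (if e + 1 = i then w e else 0)).det
      = 1 - ∏ e, w e := by
  induction n with
  | zero =>
      rw [Matrix.det_fin_one]
      simp [Fin.prod_univ_one]
  | succ n _ =>
      set A : Matrix (Fin (n + 2)) (Fin (n + 2)) R :=
        Matrix.of fun i e : Fin (n + 2) =>
          (if e = i then (1 : R) else 0) - (if e + 1 = i then w e else 0) with hAdef
      have hcs : ∀ j : Fin (n + 1), (Fin.castSucc j) + 1 = j.succ := by
        intro j
        apply Fin.ext
        simp [Fin.add_def, Fin.val_succ]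
        exact Nat.le_of_lt_succ j.isLt
      have h0 : (0 : Fin (n+2)) ≠ Fin.last (n+1) := by
        simp [Fin.ext_iff, Fin.last]
      have h1 : Fin.last (n + 1) + 1 = (0 : Fin (n + 2)) := by
        apply Fin.ext
        simp [Fin.add_def, Fin.last]
      have hA : ∀ i : Fin (n + 2),
          A i (Fin.last (n+1))
          = (if i = 0 then -(w (Fin.last (n+1))) else 0)
              + (if i = Fin.last (n+1) then 1 else 0) := by
        intro i
        rw [hAdef, Matrix.of_apply, h1]
        by_cases hi0 : i = 0 <;> by_cases hil : i = Fin.last (n+1) <;> simp_all [eq_comm]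
      rw [Matrix.det_succ_column A (Fin.last (n + 1))]
      -- reduce the sum to two terms
      conv_lhs =>
        rw [show (Finset.univ : Finset (Fin (n+2))) = insert 0 (insert (Fin.last (n+1))
              ((Finset.univ : Finset (Fin (n+2))) \ {0, Fin.last (n+1)})) from by
            ext x
            simp [Finset.mem_insert, Finset.mem_sdiff]
            tauto]
      rw [Finset.sum_insert (by simp [h0]), Finset.sum_insert (by simp)]
      have hzero : ∑ i ∈ (Finset.univ : Finset (Fin (n+2))) \ {0, Fin.last (n+1)},
          (-1 : R) ^ ((i : ℕ) + (Fin.last (n+1) : ℕ)) * A i (Fin.last (n+1)) *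
            (A.submatrix i.succAbove (Fin.last (n+1)).succAbove).det = 0 := by
        apply Finset.sum_eq_zero
        intro x hx
        simp only [Finset.mem_sdiff, Finset.mem_insert, Finset.mem_singleton] at hx
        rw [hA x, if_neg (by tauto), if_neg (by tauto)]
        ring
      rw [hzero, add_zero]
      rw [hA 0, hA (Fin.last (n+1))]
      rw [if_pos rfl, if_neg h0, if_neg h0.symm, if_pos rfl]
      -- the two minors
      have hL : (A.submatrix (Fin.last (n+1)).succAbove (Fin.last (n+1)).succAbove).det = 1 := by
        rw [Matrix.det_of_lowerTriangular]
        · apply Finset.prod_eq_one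
          intro i _
          simp only [Matrix.submatrix_apply, Fin.succAbove_last, hAdef, Matrix.of_apply, hcs]
          simp [Fin.ext_iff]
        · intro i j hij
          replace hij : i < j := hij
          simp only [Matrix.submatrix_apply, Fin.succAbove_last, hAdef, Matrix.of_apply, hcs]
          rw [if_neg (by simp [Fin.ext_iff]; omega), if_neg (by simp [Fin.ext_iff]; omega)]
          ring
      have hU : (A.submatrix (Fin.succAbove 0) (Fin.last (n+1)).succAbove).det
          = ∏ i : Fin (n+1), (0 - w i.castSucc) := by
        rw [Matrix.det_of_upperTriangular]
        · apply Finset.prod_congr rfl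
          intro i _
          simp only [Matrix.submatrix_apply, Fin.succAbove_last, Fin.succAbove_zero, hAdef,
            Matrix.of_apply, hcs]
          rw [if_neg (by simp [Fin.ext_iff])]
          simp
        · intro i j hij
          replace hij : j < i := hij
          simp only [Matrix.submatrix_apply, Fin.succAbove_last, Fin.succAbove_zero, hAdef,
            Matrix.of_apply, hcs]
          rw [if_neg (by simp [Fin.ext_iff]; omega),
              if_neg (by simp [Fin.succ_inj]; omega)]
          ring
      rw [hL, hU]
      have hprodneg : ∏ i : Fin (n+1), (0 - w i.castSucc)
          = (-1 : R) ^ (n+1) * ∏ i : Fin (n+1), w i.castSucc := by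
        rw [show ((-1:R)^(n+1)) = ∏ _i : Fin (n+1), (-1:R) from by simp,
          ← Finset.prod_mul_distrib]
        apply Finset.prod_congr rfl
        intros
        ring
      rw [hprodneg, Fin.prod_univ_castSucc (f := w)]
      simp only [Fin.val_zero, Fin.val_last, pow_zero, zero_add, add_zero]
      have hsq : ((-1:R) ^ (n + 1)) * ((-1:R) ^ (n + 1)) = 1 := by
        rw [← pow_add, ← two_mul, pow_mul]
        norm_num
      have hsq2 : ((-1:R) ^ ((n + 1) + (n + 1))) = 1 := by
        rw [← two_mul, pow_mul]
        norm_num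
      linear_combination (-(w (Fin.last (n+1)) * ∏ i : Fin (n+1), w i.castSucc)) * hsq + hsq2

set_option maxHeartbeats 1000000 in
/-- For a cyclic graph, `det L_G = σ (2 − φ − φ⁻¹)` where `σ` is the product of
the edge signs and `φ` is the connection of the cycle. -/
theorem lapDet_cyclicGraph {R : Type} [CommRing R] (n : ℕ) (σ : Fin (n + 1) → R)
    (φ : Fin (n + 1) → Rˣ) (hσ : ∀ i, σ i = 1 ∨ σ i = -1) :
    (cyclicGraph R n σ φ).lapDet
      = (∏ i, σ i) *
        (2 - ((∏ i, φ i : Rˣ) : R) - (((∏ i, φ i)⁻¹ : Rˣ) : R)) := by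
  classical
  set X : Matrix (Fin (n + 1)) (Fin (n + 1)) R :=
    Matrix.of fun i e : Fin (n + 1) =>
      (if e = i then (1 : R) else 0) - (if e + 1 = i then (((φ e)⁻¹ : Rˣ) : R) else 0) with hX
  set Y : Matrix (Fin (n + 1)) (Fin (n + 1)) R :=
    Matrix.of fun j e : Fin (n + 1) =>
      (if e = j then (1 : R) else 0) - (if e + 1 = j then ((φ e : Rˣ) : R) else 0) with hY
  have hentry : ∀ i j : Fin (n + 1), (cyclicGraph R n σ φ).lap i j
      = (X * Matrix.diagonal σ * Y.transpose) i j := by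
    intro i j
    rw [Matrix.mul_apply]
    simp only [Matrix.mul_diagonal, Matrix.transpose_apply, hX, hY, Matrix.of_apply]
    clear hX hY X Y
    show Matrix.diagonal (cyclicGraph R n σ φ).deg i j - (cyclicGraph R n σ φ).adj i j = _
    erw [Matrix.diagonal_apply]
    simp only [CGraph.deg, CGraph.adj, cyclicGraph]
    show (if i = j then ∑ e : Fin (n+1), σ e * ((if e = i then (1:R) else 0) + (if e + 1 = i then 1 else 0)) else 0) - ∑ e : Fin (n+1), ((if e = i ∧ e + 1 = j then σ e * ((φ e : Rˣ) : R) else 0) + (if e = j ∧ e + 1 = i then σ e * (((φ e)⁻¹ : Rˣ) : R) else 0)) = _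
    rw [show (if i = j then ∑ e : Fin (n+1), σ e *
          ((if e = i then (1:R) else 0) + (if e + 1 = i then 1 else 0)) else 0)
        = ∑ e : Fin (n+1), (if i = j then σ e *
          ((if e = i then (1:R) else 0) + (if e + 1 = i then 1 else 0)) else 0) from by
      split <;> simp]
    rw [← Finset.sum_sub_distrib]
    apply Finset.sum_congr rfl
    intro e _
    have hinv : (((φ e)⁻¹ : Rˣ) : R) * ((φ e : Rˣ) : R) = 1 := by
      rw [← Units.val_mul, inv_mul_cancel]
      rfl
    generalize ((φ e : Rˣ) : R) = a at *
    generalize (((φ e)⁻¹ : Rˣ) : R) = b at *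
    split_ifs <;>
      first
        | ring1
        | linear_combination (σ e) * hinv
        | linear_combination (-(σ e)) * hinv
        | linear_combination (2 * σ e) * hinv
        | linear_combination (-(2 * σ e)) * hinv
        | (exfalso; subst_vars; tauto)
        | (exfalso; subst_vars; simp_all)
  have hfact : (cyclicGraph R n σ φ).lap = X * Matrix.diagonal σ * Y.transpose := by
    ext i j
    exact hentry i j
  rw [CGraph.lapDet, hfact]
  show (X * Matrix.diagonal σ * Y.transpose).det = _
  rw [Matrix.det_mul, Matrix.det_mul, Matrix.det_transpose,
    Matrix.det_diagonal, hX, hY, det_cyclicBidiag, det_cyclicBidiag]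
  have ha : ((∏ i, φ i : Rˣ) : R) = ∏ i, ((φ i : Rˣ) : R) :=
    map_prod (Units.coeHom R) φ Finset.univ
  have hb : (((∏ i, φ i)⁻¹ : Rˣ) : R) = ∏ i, (((φ i)⁻¹ : Rˣ) : R) := by
    rw [← Finset.prod_inv_distrib]
    exact map_prod (Units.coeHom R) (fun i => (φ i)⁻¹) Finset.univ
  have hab : (∏ i, (((φ i)⁻¹ : Rˣ) : R)) * (∏ i, ((φ i : Rˣ) : R)) = 1 := by
    rw [← hb, ← ha, ← Units.val_mul, inv_mul_cancel]
    rfl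
  rw [ha, hb]
  have hV : ∏ i : (cyclicGraph R n σ φ).V, σ i = ∏ i : Fin (n + 1), σ i := rfl
  linear_combination (∏ i : Fin (n + 1), σ i) * hab
end

section
/- Let Λ = ℤ[x^{±1}, y^{±1}], let M be the Λ-module presented by the 2×2 matrix with rows (3, −1−x−y) and (−1−x^{-1}−y^{-1}, 3), and let N be the Λ-module presented by the 1×1 matrix (6 − x − x^{-1} − y − y^{-1} − x y^{-1} − x^{-1} y). Then M and N are not isomorphic as Λ-modules. -/
/-- The Laurent polynomial ring `Λ = ℤ[x^{±1}, y^{±1}]`, realized as the group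
ring of `ℤ × ℤ` over `ℤ`. -/
abbrev Lau2 : Type := AddMonoidAlgebra ℤ (ℤ × ℤ)

/-- The monomial `x`. -/
noncomputable def X : Lau2 := AddMonoidAlgebra.single ((1, 0) : ℤ × ℤ) 1
/-- The monomial `x⁻¹`. -/
noncomputable def X' : Lau2 := AddMonoidAlgebra.single ((-1, 0) : ℤ × ℤ) 1
/-- The monomial `y`. -/
noncomputable def Y : Lau2 := AddMonoidAlgebra.single ((0, 1) : ℤ × ℤ) 1
/-- The monomial `y⁻¹`. -/
noncomputable def Y' : Lau2 := AddMonoidAlgebra.single ((0, -1) : ℤ × ℤ) 1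

/-- The presentation matrix of the Laplacian module of the theta-graph. -/
noncomputable def P : Matrix (Fin 2) (Fin 2) Lau2 := !![3, -1 - X - Y; -1 - X' - Y', 3]

/-- The Laplacian module `M` of the theta-graph: `Λ²` modulo the row space of `P`. -/
noncomputable abbrev M : Type := (Fin 2 → Lau2) ⧸ LinearMap.range P.vecMulLinear

/-- The presentation matrix of the Laplacian module of the dual graph. -/
noncomputable def Q : Matrix (Fin 1) (Fin 1) Lau2 :=
  !![6 - X - X' - Y - Y' - X * Y' - X' * Y]

/-- The Laplacian module `N` of the dual graph: `Λ` modulo the row space of `Q`. -/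
noncomputable abbrev N : Type := (Fin 1 → Lau2) ⧸ LinearMap.range Q.vecMulLinear

/-- Augmentation mod 3: the ring homomorphism `Λ → ℤ/3` sending `x, y ↦ 1`. -/
noncomputable def ρ : Lau2 →+* ZMod 3 :=
  AddMonoidAlgebra.liftNCRingHom (Int.castRingHom (ZMod 3)) 1 fun _ _ => Commute.all _ _

lemma rho_single (a : ℤ × ℤ) (n : ℤ) : ρ (AddMonoidAlgebra.single a n) = (n : ZMod 3) := by
  simp [ρ, AddMonoidAlgebra.liftNCRingHom, AddMonoidAlgebra.liftNC_single]

lemma rho_X : ρ X = 1 := by simpa [X] using rho_single (1, 0) 1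
lemma rho_X' : ρ X' = 1 := by simpa [X'] using rho_single (-1, 0) 1
lemma rho_Y : ρ Y = 1 := by simpa [Y] using rho_single (0, 1) 1
lemma rho_Y' : ρ Y' = 1 := by simpa [Y'] using rho_single (0, -1) 1

/-- `ℤ/3` as a `Λ`-module via `ρ`. -/
noncomputable local instance : Module Lau2 (ZMod 3) := Module.compHom _ ρ

lemma lau2_smul_def (c : Lau2) (v : ZMod 3) : c • v = ρ c * v := rfl

lemma rho_three : ρ 3 = 0 := by
  have : ρ 3 = ((3 : ℕ) : ZMod 3) := map_natCast ρ 3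
  rw [this]; decide

lemma rho_P (i j : Fin 2) : ρ (P i j) = 0 := by
  fin_cases i <;> fin_cases j <;>
    simp [P, map_sub, map_neg, rho_X, rho_X', rho_Y, rho_Y', rho_three] <;> decide

/-- The evaluation functional on `Λ²` attached to a pair `(a, b)` in `ℤ/3`. -/
noncomputable def g (a b : ZMod 3) : (Fin 2 → Lau2) →ₗ[Lau2] ZMod 3 where
  toFun v := ρ (v 0) * a + ρ (v 1) * b
  map_add' v w := by simp [map_add]; ring
  map_smul' c v := by
    simp [lau2_smul_def, Pi.smul_apply, smul_eq_mul, map_mul]; ring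

lemma g_range (a b : ZMod 3) : LinearMap.range P.vecMulLinear ≤ LinearMap.ker (g a b) := by
  rintro _ ⟨v, rfl⟩
  have h0 : ∀ j, (P.vecMulLinear v) j = v 0 * P 0 j + v 1 * P 1 j := by
    intro j
    simp [Matrix.vecMulLinear_apply, Matrix.vecMul, dotProduct, Fin.sum_univ_two]
  simp only [LinearMap.mem_ker, g, LinearMap.coe_mk, AddHom.coe_mk, h0, map_add, map_mul,
    rho_P, mul_zero, zero_add, add_zero, zero_mul]

/-- The induced functional on `M`. -/
noncomputable def G (a b : ZMod 3) : M →ₗ[Lau2] ZMod 3 :=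
  Submodule.liftQ _ (g a b) (g_range a b)

lemma G_e0 (a b : ZMod 3) :
    G a b (Submodule.Quotient.mk (Pi.single 0 1)) = a := by
  simp [G, g, Pi.single_apply]

lemma G_e1 (a b : ZMod 3) :
    G a b (Submodule.Quotient.mk (Pi.single 1 1)) = b := by
  simp [G, g, Pi.single_apply]

/-- Any `Λ`-linear functional on `N` is determined by its value at the class of `1`. -/
lemma N_funct_ext (f₁ f₂ : N →ₗ[Lau2] ZMod 3)
    (h : f₁ (Submodule.Quotient.mk fun _ => 1) = f₂ (Submodule.Quotient.mk fun _ => 1)) :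
    f₁ = f₂ := by
  refine LinearMap.ext fun z => ?_
  obtain ⟨v, rfl⟩ := Submodule.mkQ_surjective _ z
  have hv : v = v 0 • fun _ => (1 : Lau2) := by
    funext j; fin_cases j; simp
  have hq : (Submodule.mkQ _ v : N)
      = v 0 • Submodule.Quotient.mk fun _ => (1 : Lau2) := by
    conv_lhs => rw [hv]
    simp [Submodule.Quotient.mk_smul]
  rw [hq, map_smul, map_smul, h]

/-- The Laplacian modules `M` and `N` of the theta-graph and of its dual graph
are not isomorphic as `Λ`-modules. -/
theorem theta_modules_not_isomorphic : IsEmpty (M ≃ₗ[Lau2] N) := by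
  constructor
  intro e
  -- transfer the functionals `G a b` to `N` and evaluate at the class of `1`
  set F : ZMod 3 × ZMod 3 → ZMod 3 := fun p =>
    ((G p.1 p.2).comp e.symm.toLinearMap) (Submodule.Quotient.mk fun _ => 1) with hF
  have hinj : Function.Injective F := by
    intro ⟨a, b⟩ ⟨a', b'⟩ h
    have hcomp : (G a b).comp e.symm.toLinearMap = (G a' b').comp e.symm.toLinearMap :=
      N_funct_ext _ _ h
    have hG : G a b = G a' b' := by
      refine LinearMap.ext fun m => ?_
      have := congrArg (fun f : N →ₗ[Lau2] ZMod 3 => f (e m)) hcomp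
      simpa using this
    have ha : a = a' := by
      have := congrArg (fun f : M →ₗ[Lau2] ZMod 3 =>
        f (Submodule.Quotient.mk (Pi.single 0 1) : M)) hG
      simpa [G_e0] using this
    have hb : b = b' := by
      have := congrArg (fun f : M →ₗ[Lau2] ZMod 3 =>
        f (Submodule.Quotient.mk (Pi.single 1 1) : M)) hG
      simpa [G_e1] using this
    simp [ha, hb]
  have := Fintype.card_le_of_injective F hinj
  simp at this
end

section
/- Let G be a signed graph with connections over a commutative ring R, and suppose G has a vertex w of degree 1 joined to a vertex v by a single edge e of sign +1 and connection φ_e, with no other edges at w. Let G' be the graph obtained from G by deleting w and e. Then the cokernel of L_G and the cokernel of L_{G'} are isomorphic R-modules. -/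
/-- The cokernel of a square matrix `P` over `R`: `Rⁿ` modulo the image of the
linear map given by `P`. -/
abbrev Matrix.coker {R : Type} [CommRing R] {ι : Type} [Fintype ι] [DecidableEq ι]
    (P : Matrix ι ι R) : Type :=
  (ι → R) ⧸ LinearMap.range P.mulVecLin

namespace CGraph

/-- Deletion of a degree-1 vertex `tgt e0` together with its unique incident
edge `e0`. -/
def deleteLeaf {R : Type} [CommRing R] (G : CGraph R) (e0 : G.E)
    (hw : ∀ e, e ≠ e0 → G.src e ≠ G.tgt e0 ∧ G.tgt e ≠ G.tgt e0) : CGraph R where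
  V := {u : G.V // u ≠ G.tgt e0}
  E := {e : G.E // e ≠ e0}
  src e := ⟨G.src e.1, (hw e.1 e.2).1⟩
  tgt e := ⟨G.tgt e.1, (hw e.1 e.2).2⟩
  sign e := G.sign e.1
  conn e := G.conn e.1

end CGraph

open Matrix

private lemma sum_split {ι : Type} [Fintype ι] [DecidableEq ι] (i0 : ι) {M : Type}
    [AddCommMonoid M] (f : ι → M) :
    ∑ i, f i = f i0 + ∑ i : {i // i ≠ i0}, f i.1 := by
  classical
  rw [Fintype.sum_eq_add_sum_compl i0 f]
  congr 1
  rw [← Finset.sum_subtype (Finset.univ.filter (· ≠ i0)) (by simp) f]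
  apply Finset.sum_congr _ (fun _ _ => rfl)
  ext x
  simp

namespace CGraph

variable {R : Type} [CommRing R]

private lemma deg_w (G : CGraph R) (e0 : G.E)
    (hv : G.src e0 ≠ G.tgt e0) (he : G.sign e0 = 1)
    (hw : ∀ e, e ≠ e0 → G.src e ≠ G.tgt e0 ∧ G.tgt e ≠ G.tgt e0) :
    G.deg (G.tgt e0) = 1 := by
  unfold deg
  rw [sum_split e0]
  rw [Finset.sum_eq_zero (fun e _ => by
    have h1 := (hw e.1 e.2).1
    have h2 := (hw e.1 e.2).2
    simp [h1, h2])]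
  simp [hv, he]

private lemma adj_w_w (G : CGraph R) (e0 : G.E)
    (hv : G.src e0 ≠ G.tgt e0)
    (hw : ∀ e, e ≠ e0 → G.src e ≠ G.tgt e0 ∧ G.tgt e ≠ G.tgt e0) :
    G.adj (G.tgt e0) (G.tgt e0) = 0 := by
  unfold adj
  apply Finset.sum_eq_zero
  intro e _
  by_cases h : e = e0
  · subst h; simp [hv]
  · have h1 := (hw e h).1
    simp [h1]

private lemma adj_u_w (G : CGraph R) (e0 : G.E)
    (hv : G.src e0 ≠ G.tgt e0) (he : G.sign e0 = 1)
    (hw : ∀ e, e ≠ e0 → G.src e ≠ G.tgt e0 ∧ G.tgt e ≠ G.tgt e0)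
    (u : G.V) (hu : u ≠ G.tgt e0) :
    G.adj u (G.tgt e0) = if G.src e0 = u then (G.conn e0 : R) else 0 := by
  unfold adj
  rw [sum_split e0]
  rw [Finset.sum_eq_zero (fun e _ => by
    have h1 := (hw e.1 e.2).1
    have h2 := (hw e.1 e.2).2
    simp [h1, h2])]
  simp [he, hv]

private lemma adj_w_j (G : CGraph R) (e0 : G.E)
    (hv : G.src e0 ≠ G.tgt e0) (he : G.sign e0 = 1)
    (hw : ∀ e, e ≠ e0 → G.src e ≠ G.tgt e0 ∧ G.tgt e ≠ G.tgt e0)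
    (j : G.V) (hj : j ≠ G.tgt e0) :
    G.adj (G.tgt e0) j = if G.src e0 = j then (((G.conn e0)⁻¹ : Rˣ) : R) else 0 := by
  unfold adj
  rw [sum_split e0]
  rw [Finset.sum_eq_zero (fun e _ => by
    have h1 := (hw e.1 e.2).1
    have h2 := (hw e.1 e.2).2
    simp [h1, h2])]
  simp [he, hv]

private lemma deg_u (G : CGraph R) (e0 : G.E)
    (he : G.sign e0 = 1)
    (hw : ∀ e, e ≠ e0 → G.src e ≠ G.tgt e0 ∧ G.tgt e ≠ G.tgt e0)
    (u : G.V) (hu : u ≠ G.tgt e0) :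
    G.deg u = (G.deleteLeaf e0 hw).deg ⟨u, hu⟩ + (if G.src e0 = u then 1 else 0) := by
  simp only [deg, deleteLeaf]
  rw [sum_split e0]
  rw [add_comm]
  congr 1
  · apply Finset.sum_congr rfl
    intro e _
    simp [Subtype.mk.injEq]
  · have h' : G.tgt e0 ≠ u := fun h => hu h.symm
    simp [he, h']

private lemma adj_u_j (G : CGraph R) (e0 : G.E)
    (hw : ∀ e, e ≠ e0 → G.src e ≠ G.tgt e0 ∧ G.tgt e ≠ G.tgt e0)
    (u j : G.V) (hu : u ≠ G.tgt e0) (hj : j ≠ G.tgt e0) :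
    G.adj u j = (G.deleteLeaf e0 hw).adj ⟨u, hu⟩ ⟨j, hj⟩ := by
  simp only [adj, deleteLeaf]
  rw [sum_split e0]
  have h0 : ((if G.src e0 = u ∧ G.tgt e0 = j then G.sign e0 * (G.conn e0 : R) else 0)
      + (if G.src e0 = j ∧ G.tgt e0 = u then G.sign e0 * ((G.conn e0)⁻¹ : Rˣ) else 0)) = 0 := by
    have h1 : G.tgt e0 ≠ j := fun h => hj h.symm
    have h2 : G.tgt e0 ≠ u := fun h => hu h.symm
    simp [h1, h2]
  rw [h0, zero_add]
  apply Finset.sum_congr rfl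
  intro e _
  simp [Subtype.mk.injEq]

end CGraph

namespace CGraph

variable {R : Type} [CommRing R]

private lemma lap_w_w (G : CGraph R) (e0 : G.E)
    (hv : G.src e0 ≠ G.tgt e0) (he : G.sign e0 = 1)
    (hw : ∀ e, e ≠ e0 → G.src e ≠ G.tgt e0 ∧ G.tgt e ≠ G.tgt e0) :
    G.lap (G.tgt e0) (G.tgt e0) = 1 := by
  simp [lap, deg_w G e0 hv he hw, adj_w_w G e0 hv hw]

private lemma lap_u_w (G : CGraph R) (e0 : G.E)
    (hv : G.src e0 ≠ G.tgt e0) (he : G.sign e0 = 1)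
    (hw : ∀ e, e ≠ e0 → G.src e ≠ G.tgt e0 ∧ G.tgt e ≠ G.tgt e0)
    (u : G.V) (hu : u ≠ G.tgt e0) :
    G.lap u (G.tgt e0) = -(if G.src e0 = u then (G.conn e0 : R) else 0) := by
  simp [lap, Matrix.diagonal_apply_ne _ hu, adj_u_w G e0 hv he hw u hu]

private lemma lap_w_j (G : CGraph R) (e0 : G.E)
    (hv : G.src e0 ≠ G.tgt e0) (he : G.sign e0 = 1)
    (hw : ∀ e, e ≠ e0 → G.src e ≠ G.tgt e0 ∧ G.tgt e ≠ G.tgt e0)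
    (j : G.V) (hj : j ≠ G.tgt e0) :
    G.lap (G.tgt e0) j = -(if G.src e0 = j then (((G.conn e0)⁻¹ : Rˣ) : R) else 0) := by
  have h' : G.tgt e0 ≠ j := fun h => hj h.symm
  simp [lap, Matrix.diagonal_apply_ne _ h', adj_w_j G e0 hv he hw j hj]

private lemma lap_u_j (G : CGraph R) (e0 : G.E)
    (he : G.sign e0 = 1)
    (hw : ∀ e, e ≠ e0 → G.src e ≠ G.tgt e0 ∧ G.tgt e ≠ G.tgt e0)
    (u j : G.V) (hu : u ≠ G.tgt e0) (hj : j ≠ G.tgt e0) :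
    G.lap u j = (G.deleteLeaf e0 hw).lap ⟨u, hu⟩ ⟨j, hj⟩
      + (if u = j ∧ G.src e0 = u then 1 else 0) := by
  by_cases h : u = j
  · subst h
    simp only [lap, Matrix.sub_apply, Matrix.diagonal_apply_eq]
    rw [deg_u G e0 he hw u hu, adj_u_j G e0 hw u u hu hu]
    simp only [eq_self_iff_true, true_and]
    erw [Matrix.sub_apply, Matrix.diagonal_apply_eq]
    ring
  · have h' : (⟨u, hu⟩ : {v : G.V // v ≠ G.tgt e0}) ≠ ⟨j, hj⟩ := by
      simp [Subtype.ext_iff, h]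
    simp only [lap, Matrix.sub_apply, Matrix.diagonal_apply_ne _ h,
      Matrix.diagonal_apply_ne _ h', adj_u_j G e0 hw u j hu hj, h, false_and, if_false, add_zero]
    erw [Matrix.sub_apply, Matrix.diagonal_apply_ne _ h']

/-- The elimination map. -/
private def elim (G : CGraph R) (e0 : G.E) :
    (G.V → R) →ₗ[R] ({u : G.V // u ≠ G.tgt e0} → R) where
  toFun x u := x u.1 + (if G.src e0 = u.1 then (G.conn e0 : R) * x (G.tgt e0) else 0)
  map_add' x y := by
    funext u
    simp only [Pi.add_apply]
    split_ifs <;> ring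
  map_smul' c x := by
    funext u
    simp only [Pi.smul_apply, smul_eq_mul, RingHom.id_apply]
    split_ifs <;> ring

private lemma elim_apply (G : CGraph R) (e0 : G.E) (x : G.V → R)
    (u : {u : G.V // u ≠ G.tgt e0}) :
    elim G e0 x u = x u.1 + (if G.src e0 = u.1 then (G.conn e0 : R) * x (G.tgt e0) else 0) := rfl

end CGraph

namespace CGraph

variable {R : Type} [CommRing R]

private lemma key (G : CGraph R) (e0 : G.E)
    (hv : G.src e0 ≠ G.tgt e0) (he : G.sign e0 = 1)
    (hw : ∀ e, e ≠ e0 → G.src e ≠ G.tgt e0 ∧ G.tgt e ≠ G.tgt e0)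
    (x : G.V → R) (u : G.V) (hu : u ≠ G.tgt e0) :
    elim G e0 (G.lap *ᵥ x) ⟨u, hu⟩
      = ((G.deleteLeaf e0 hw).lap *ᵥ (fun j => x j.1)) ⟨u, hu⟩ := by
  classical
  have hmv : ∀ i : G.V, (G.lap *ᵥ x) i = G.lap i (G.tgt e0) * x (G.tgt e0)
      + ∑ j : {j : G.V // j ≠ G.tgt e0}, G.lap i j.1 * x j.1 := by
    intro i
    simp only [Matrix.mulVec, dotProduct]
    exact sum_split (G.tgt e0) _
  have hmv' : ((G.deleteLeaf e0 hw).lap *ᵥ (fun j => x j.1)) ⟨u, hu⟩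
      = ∑ j : {j : G.V // j ≠ G.tgt e0},
          (G.deleteLeaf e0 hw).lap ⟨u, hu⟩ ⟨j.1, j.2⟩ * x j.1 := by
    simp only [Matrix.mulVec, dotProduct]
    rfl
  rw [elim_apply, hmv u, hmv (G.tgt e0), hmv',
    lap_u_w G e0 hv he hw u hu, lap_w_w G e0 hv he hw]
  have hs1 : ∑ j : {j : G.V // j ≠ G.tgt e0}, G.lap u j.1 * x j.1
      = (∑ j : {j : G.V // j ≠ G.tgt e0},
          (G.deleteLeaf e0 hw).lap ⟨u, hu⟩ ⟨j.1, j.2⟩ * x j.1)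
        + ∑ j : {j : G.V // j ≠ G.tgt e0},
            (if u = j.1 ∧ G.src e0 = u then (1:R) else 0) * x j.1 := by
    rw [← Finset.sum_add_distrib]
    apply Finset.sum_congr rfl
    intro j _
    rw [lap_u_j G e0 he hw u j.1 hu j.2]
    ring
  have hs2 : ∑ j : {j : G.V // j ≠ G.tgt e0}, G.lap (G.tgt e0) j.1 * x j.1
      = -(∑ j : {j : G.V // j ≠ G.tgt e0},
          (if G.src e0 = j.1 then (((G.conn e0)⁻¹ : Rˣ) : R) else 0) * x j.1) := by
    rw [← Finset.sum_neg_distrib]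
    apply Finset.sum_congr rfl
    intro j _
    rw [lap_w_j G e0 hv he hw j.1 j.2]
    ring
  have hb : ∑ j : {j : G.V // j ≠ G.tgt e0},
        (if u = j.1 ∧ G.src e0 = u then (1:R) else 0) * x j.1
      = (if G.src e0 = u then (G.conn e0 : R) else 0)
        * ∑ j : {j : G.V // j ≠ G.tgt e0},
            (if G.src e0 = j.1 then (((G.conn e0)⁻¹ : Rˣ) : R) else 0) * x j.1 := by
    rw [Finset.mul_sum]
    apply Finset.sum_congr rfl
    intro j _
    by_cases h1 : G.src e0 = u
    · by_cases h2 : u = j.1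
      · have h3 : G.src e0 = j.1 := h1.trans h2
        simp only [h1, h2, h3, and_self, if_pos, if_true, one_mul]
        rw [← mul_assoc, ← Units.val_mul]
        simp
      · have h3 : ¬ G.src e0 = j.1 := fun h => h2 (h1.symm.trans h)
        simp [h2, h3]
    · simp [h1]
  rw [hs1, hs2, hb]
  by_cases hP : G.src e0 = u
  · simp only [if_pos hP]
    ring
  · simp only [if_neg hP]
    ring

private lemma col (G : CGraph R) (e0 : G.E)
    (hv : G.src e0 ≠ G.tgt e0) (he : G.sign e0 = 1)
    (hw : ∀ e, e ≠ e0 → G.src e ≠ G.tgt e0 ∧ G.tgt e ≠ G.tgt e0)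
    (z : G.V → R)
    (hz : ∀ u, u ≠ G.tgt e0 →
      z u + (if G.src e0 = u then (G.conn e0 : R) * z (G.tgt e0) else 0) = 0) :
    G.lap *ᵥ (Pi.single (G.tgt e0) (z (G.tgt e0))) = z := by
  classical
  funext i
  have h0 : (G.lap *ᵥ Pi.single (G.tgt e0) (z (G.tgt e0))) i
      = G.lap i (G.tgt e0) * z (G.tgt e0) := by
    simp only [Matrix.mulVec, dotProduct, Pi.single_apply, mul_ite, mul_zero]
    simp
  rw [h0]
  by_cases h : i = G.tgt e0
  · subst h
    rw [lap_w_w G e0 hv he hw]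
    ring
  · rw [lap_u_w G e0 hv he hw i h]
    have hh := hz i h
    split_ifs at hh ⊢ with h2
    · linear_combination (-1 : R) * hh
    · simpa using hh.symm

end CGraph

/-- If `w = tgt e0` is a vertex of degree 1, joined to `v = src e0` by the
single edge `e0` of sign `+1`, then deleting `w` and `e0` does not change the
Laplacian module: the cokernels of `L_G` and `L_{G'}` are isomorphic
`R`-modules. -/
theorem coker_deleteLeaf {R : Type} [CommRing R] (G : CGraph R)
    (hsign : ∀ e, G.sign e = 1 ∨ G.sign e = -1) (e0 : G.E)
    (hv : G.src e0 ≠ G.tgt e0) (he : G.sign e0 = 1)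
    (hw : ∀ e, e ≠ e0 → G.src e ≠ G.tgt e0 ∧ G.tgt e ≠ G.tgt e0) :
    Nonempty (G.lap.coker ≃ₗ[R] (G.deleteLeaf e0 hw).lap.coker) := by
  classical
  set q : Submodule R ((G.deleteLeaf e0 hw).V → R) :=
    LinearMap.range ((G.deleteLeaf e0 hw).lap.mulVecLin) with hq
  let g : (G.V → R) →ₗ[R] ((G.deleteLeaf e0 hw).V → R) ⧸ q :=
    q.mkQ.comp (CGraph.elim G e0 : (G.V → R) →ₗ[R] ((G.deleteLeaf e0 hw).V → R))
  have hkey : ∀ x : G.V → R,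
      CGraph.elim G e0 (G.lap *ᵥ x) = (G.deleteLeaf e0 hw).lap *ᵥ (fun j => x j.1) := by
    intro x
    funext u
    exact CGraph.key G e0 hv he hw x u.1 u.2
  have hsurj : Function.Surjective g := by
    apply Function.Surjective.comp (Submodule.mkQ_surjective q)
    intro y
    refine ⟨fun i => if h : i = G.tgt e0 then 0 else y ⟨i, h⟩, ?_⟩
    funext u
    refine (CGraph.elim_apply G e0 _ ⟨u.1, u.2⟩).trans ?_
    simp [u.2]
    rfl
  have hker : LinearMap.ker g = LinearMap.range (G.lap.mulVecLin) := by
    show LinearMap.ker (q.mkQ.comp (CGraph.elim G e0)) = _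
    erw [LinearMap.ker_comp, Submodule.ker_mkQ]
    apply le_antisymm
    · intro x hx
      obtain ⟨a, ha⟩ := hx
      set x' : G.V → R := fun i => if h : i = G.tgt e0 then 0 else a ⟨i, h⟩ with hx'
      have hres : (fun j : {u : G.V // u ≠ G.tgt e0} => x' j.1) = a := by
        funext j
        simp only [hx', dif_neg j.2]
      have h1 : CGraph.elim G e0 (G.lap *ᵥ x') = (G.deleteLeaf e0 hw).lap *ᵥ a := by
        rw [hkey x']
        exact congrArg _ hres
      have hz : CGraph.elim G e0 (x - G.lap *ᵥ x') = 0 := by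
        rw [map_sub, h1, ← Matrix.mulVecLin_apply, ha]
        exact sub_self _
      have hz' : ∀ u, u ≠ G.tgt e0 →
          (x - G.lap *ᵥ x') u + (if G.src e0 = u then (G.conn e0 : R)
            * (x - G.lap *ᵥ x') (G.tgt e0) else 0) = 0 := by
        intro u hu
        have h2 := congrFun hz ⟨u, hu⟩
        rw [CGraph.elim_apply] at h2
        simpa using h2
      have hcol := CGraph.col G e0 hv he hw (x - G.lap *ᵥ x') hz'
      refine ⟨x' + Pi.single (G.tgt e0) ((x - G.lap *ᵥ x') (G.tgt e0)), ?_⟩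
      rw [Matrix.mulVecLin_apply, Matrix.mulVec_add, hcol]
      simp
    · rintro _ ⟨y, rfl⟩
      refine ⟨fun j => y j.1, ?_⟩
      rw [Matrix.mulVecLin_apply, Matrix.mulVecLin_apply]
      exact (hkey y).symm
  exact ⟨(Submodule.quotEquivOfEq _ _ hker.symm).trans (g.quotKerEquivOfSurjective hsurj)⟩
end

section
/- Let L be an n×n matrix over a commutative ring R whose first row has invertible first entry a (a a unit of R). Let L' be the (n−1)×(n−1) matrix obtained from L by the row/column operations eliminating the first row and column using a (i.e., L'_{ij} = L_{(i+1)(j+1)} − L_{(i+1)1} a^{-1} L_{1(j+1)}). Then coker(L) ≅ coker(L') as R-modules, and det(L) = a · det(L'). -/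
open Matrix

/-- Cokernels are preserved by conjugation by a linear equivalence. -/
noncomputable def cokerEquivOfConj {R M M' : Type} [CommRing R] [AddCommGroup M] [Module R M]
    [AddCommGroup M'] [Module R M'] (f : M →ₗ[R] M) (f' : M' →ₗ[R] M') (e : M ≃ₗ[R] M')
    (h : ∀ x, e (f x) = f' (e x)) :
    (M ⧸ LinearMap.range f) ≃ₗ[R] (M' ⧸ LinearMap.range f') :=
  Submodule.Quotient.equiv _ _ e (by
    ext y
    simp only [Submodule.mem_map, LinearMap.mem_range]
    constructor
    · rintro ⟨x, ⟨v, rfl⟩, rfl⟩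
      exact ⟨e v, (h v).symm⟩
    · rintro ⟨w, rfl⟩
      refine ⟨f (e.symm w), ⟨e.symm w, rfl⟩, ?_⟩
      rw [LinearEquiv.coe_coe, h (e.symm w), e.apply_symm_apply])

lemma range_mulVecLin_of_mul_right {R ι : Type} [CommRing R] [Fintype ι] [DecidableEq ι]
    (M F : Matrix ι ι R) [Invertible F] :
    LinearMap.range (M * F).mulVecLin = LinearMap.range M.mulVecLin := by
  have hF : LinearMap.range F.mulVecLin = ⊤ := by
    rw [LinearMap.range_eq_top]
    intro w
    refine ⟨(⅟F).mulVec w, ?_⟩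
    simp [Matrix.mulVecLin_apply, Matrix.mulVec_mulVec]
  rw [Matrix.mulVecLin_mul, LinearMap.range_comp, hF, Submodule.map_top]

/-- Cokernel is invariant under multiplication by invertible matrices. -/
noncomputable def cokerMulEquiv {R ι : Type} [CommRing R] [Fintype ι] [DecidableEq ι]
    (E M F : Matrix ι ι R) [Invertible E] [Invertible F] :
    (E * M * F).coker ≃ₗ[R] M.coker :=
  Submodule.Quotient.equiv _ _ (Matrix.toLinearEquiv' E ‹_›).symm (by
    have hsymm : ∀ z, (Matrix.toLinearEquiv' E ‹_›).symm z = (⅟E).mulVec z := fun z => by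
      have h0 : (Matrix.toLinearEquiv' E ‹_›).symm z
          = (↑(Matrix.toLinearEquiv' E ‹_›).symm : Module.End R (ι → R)) z := rfl
      rw [h0, Matrix.toLinearEquiv'_symm_apply, Matrix.toLin'_apply]
    ext y
    simp only [Submodule.mem_map, LinearMap.mem_range, Matrix.mulVecLin_apply]
    constructor
    · rintro ⟨x, ⟨v, rfl⟩, rfl⟩
      refine ⟨F.mulVec v, ?_⟩
      rw [LinearEquiv.coe_coe, hsymm, Matrix.mulVec_mulVec, Matrix.mulVec_mulVec, Matrix.mul_assoc E M F,
        invOf_mul_cancel_left]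
    · rintro ⟨w, rfl⟩
      refine ⟨(E * M * F).mulVec ((⅟F).mulVec w), ⟨(⅟F).mulVec w, rfl⟩, ?_⟩
      rw [LinearEquiv.coe_coe, hsymm, Matrix.mulVec_mulVec, Matrix.mulVec_mulVec, Matrix.mul_assoc E M F,
        invOf_mul_cancel_left, mul_invOf_cancel_right])

/-- Pivot/Schur-complement lemma: if the `(0,0)` entry of `L` is a unit `u` and
`L'` is obtained from `L` by eliminating the first row and column using this
pivot (`L'ᵢⱼ = L_{i+1,j+1} − L_{i+1,0} u⁻¹ L_{0,j+1}`), then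
`coker L ≅ coker L'` and `det L = u · det L'`. -/
theorem schur_pivot {R : Type} [CommRing R] {n : ℕ}
    (L : Matrix (Fin (n + 1)) (Fin (n + 1)) R) (u : Rˣ) (hu : (u : R) = L 0 0)
    (L' : Matrix (Fin n) (Fin n) R)
    (hL' : ∀ i j, L' i j = L i.succ j.succ - L i.succ 0 * ((u⁻¹ : Rˣ) : R) * L 0 j.succ) :
    Nonempty (L.coker ≃ₗ[R] L'.coker) ∧ L.det = (u : R) * L'.det := by
  classical
  let e : Fin 1 ⊕ Fin n ≃ Fin (n + 1) := finSumFinEquiv.trans (finCongr (Nat.add_comm 1 n))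
  have he0 : ∀ i : Fin 1, e (Sum.inl i) = 0 := by
    intro i
    have hi : (i : ℕ) = 0 := by omega
    ext
    simp [e, hi]
  have hes : ∀ j : Fin n, e (Sum.inr j) = j.succ := by
    intro j
    ext
    simp [e, Nat.add_comm]
  let A : Matrix (Fin 1) (Fin 1) R := of fun _ _ => (u : R)
  let Bb : Matrix (Fin 1) (Fin n) R := of fun _ j => L 0 j.succ
  let Cc : Matrix (Fin n) (Fin 1) R := of fun i _ => L i.succ 0
  let D : Matrix (Fin n) (Fin n) R := of fun i j => L i.succ j.succ
  let Ainv : Matrix (Fin 1) (Fin 1) R := of fun _ _ => ((u⁻¹ : Rˣ) : R)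
  have h1 : Ainv * A = 1 := by
    ext i j
    fin_cases i; fin_cases j
    simp [Ainv, A, Matrix.mul_apply, Matrix.one_apply]
  have h2 : A * Ainv = 1 := by
    ext i j
    fin_cases i; fin_cases j
    simp [Ainv, A, Matrix.mul_apply, Matrix.one_apply]
  letI invA : Invertible A := ⟨Ainv, h1, h2⟩
  have hinv : ⅟A = Ainv := rfl
  have hSub : L.submatrix e e = fromBlocks A Bb Cc D := by
    ext i j
    cases i with
    | inl i => cases j with
      | inl j =>
        have hi : i = 0 := Subsingleton.elim _ _
        have hj : j = 0 := Subsingleton.elim _ _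
        simp [hi, hj, he0, hu, A]
      | inr j => simp [he0, hes, Bb, Subsingleton.elim i 0]
    | inr i => cases j with
      | inl j => simp [he0, hes, Cc, Subsingleton.elim j 0]
      | inr j => simp [hes, D]
  have hD' : D - Cc * ⅟A * Bb = L' := by
    ext i j
    simp [hinv, D, Cc, Bb, Ainv, Matrix.mul_apply, Fin.sum_univ_one, hL']
  have hdet : L.det = (u : R) * L'.det := by
    have hs := Matrix.det_submatrix_equiv_self e L
    rw [← hs, hSub, Matrix.det_fromBlocks₁₁, hD']
    congr 1
    simp [Matrix.det_fin_one, A]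
  refine ⟨?_, hdet⟩
  -- step 1 : coker L ≃ coker (L.submatrix e e)
  let T : (Fin (n + 1) → R) ≃ₗ[R] ((Fin 1 ⊕ Fin n) → R) := LinearEquiv.funCongrLeft R R e
  have hTconj : ∀ v, T (L.mulVecLin v) = (L.submatrix e e).mulVecLin (T v) := by
    intro v
    show (L.mulVec v) ∘ e = (L.submatrix e e).mulVec (v ∘ e)
    have hv : (v ∘ e) ∘ e.symm = v := by funext j; simp
    rw [Matrix.submatrix_mulVec_equiv, hv]
  let eq1 : L.coker ≃ₗ[R] (L.submatrix e e).coker :=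
    cokerEquivOfConj L.mulVecLin (L.submatrix e e).mulVecLin T hTconj
  -- step 2 : LDU decomposition
  let Mm : Matrix (Fin 1 ⊕ Fin n) (Fin 1 ⊕ Fin n) R := fromBlocks A 0 0 L'
  let Eu : Matrix (Fin 1 ⊕ Fin n) (Fin 1 ⊕ Fin n) R := fromBlocks 1 0 (Cc * ⅟A) 1
  let Fu : Matrix (Fin 1 ⊕ Fin n) (Fin 1 ⊕ Fin n) R := fromBlocks 1 (⅟A * Bb) 0 1
  have hLDU : L.submatrix e e = Eu * Mm * Fu := by
    rw [hSub, Matrix.fromBlocks_eq_of_invertible₁₁, hD']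
  letI : Invertible (1 : Matrix (Fin 1) (Fin 1) R) := invertibleOne
  letI : Invertible (1 : Matrix (Fin n) (Fin n) R) := invertibleOne
  letI invEu : Invertible Eu := Matrix.fromBlocksZero₁₂Invertible (1 : Matrix (Fin 1) (Fin 1) R) (Cc * ⅟A) (1 : Matrix (Fin n) (Fin n) R)
  letI invFu : Invertible Fu := Matrix.fromBlocksZero₂₁Invertible (1 : Matrix (Fin 1) (Fin 1) R) (⅟A * Bb) (1 : Matrix (Fin n) (Fin n) R)
  let eq2a : (L.submatrix e e).coker ≃ₗ[R] (Eu * Mm * Fu).coker :=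
    Submodule.quotEquivOfEq _ _ (by rw [hLDU])
  let eq2 : (L.submatrix e e).coker ≃ₗ[R] Mm.coker := eq2a.trans (cokerMulEquiv Eu Mm Fu)
  -- step 3 : coker of block diagonal with invertible block
  let π : ((Fin 1 ⊕ Fin n) → R) →ₗ[R] L'.coker :=
    (LinearMap.range L'.mulVecLin).mkQ.comp (LinearMap.funLeft R R Sum.inr)
  have hπs : Function.Surjective π :=
    (Submodule.mkQ_surjective _).comp
      (LinearMap.funLeft_surjective_of_injective R R Sum.inr Sum.inr_injective)
  have hker : LinearMap.ker π = LinearMap.range Mm.mulVecLin := by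
    have : LinearMap.ker π =
        Submodule.comap (LinearMap.funLeft R R Sum.inr) (LinearMap.range L'.mulVecLin) := by
      rw [LinearMap.ker_comp, Submodule.ker_mkQ]
    rw [this]
    ext w
    simp only [Submodule.mem_comap, LinearMap.mem_range, Matrix.mulVecLin_apply,
      LinearMap.funLeft_apply]
    constructor
    · rintro ⟨y, hy⟩
      refine ⟨Sum.elim (Ainv.mulVec (w ∘ Sum.inl)) y, ?_⟩
      rw [show Mm = fromBlocks A 0 0 L' from rfl, Matrix.fromBlocks_mulVec]
      have hl : (Sum.elim (Ainv.mulVec (w ∘ Sum.inl)) y) ∘ Sum.inl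
          = Ainv.mulVec (w ∘ Sum.inl) := rfl
      have hr : (Sum.elim (Ainv.mulVec (w ∘ Sum.inl)) y) ∘ Sum.inr = y := rfl
      rw [hl, hr]
      funext x
      cases x with
      | inl i =>
        simp [Matrix.mulVec_mulVec, h2, Matrix.zero_mulVec]
      | inr i =>
        simp [Matrix.zero_mulVec]
        exact congrFun hy i
    · rintro ⟨x, hx⟩
      refine ⟨x ∘ Sum.inr, ?_⟩
      rw [show Mm = fromBlocks A 0 0 L' from rfl, Matrix.fromBlocks_mulVec] at hx
      funext i
      simpa [Matrix.zero_mulVec] using congrFun hx (Sum.inr i)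
  let eq3 : Mm.coker ≃ₗ[R] L'.coker :=
    (Submodule.quotEquivOfEq _ _ hker.symm).trans (π.quotKerEquivOfSurjective hπs)
  exact ⟨(eq1.trans eq2).trans eq3⟩
end

section
/- Let G be a finite signed graph with connections φ_e valued in the units of a commutative ring R. Then det(L_G) = Σ_F (Π_{e ∈ E_F} σ_e) · (Π_{cycles C of F} (2 − φ_C − φ_C^{-1})), where the sum is over all cycle-rooted spanning forests F of G (spanning subgraphs each of whose components contains exactly one cycle) and φ_C is the connection of the cycle C with a chosen orientation. -/
namespace CGraph

variable {R : Type} [CommRing R]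

/-- A cycle-rooted spanning forest of `G`, together with an orientation of each
of its cycles: equivalently, a choice of one outgoing (directed) edge at each
vertex, no (undirected) edge being used twice.  Each component of the resulting
spanning subgraph contains a unique cycle; tree edges are oriented toward the
cycle of their component, and the cycles acquire an orientation. -/
structure OCRSF (G : CGraph R) where
  /-- the edge chosen at each vertex -/
  f : G.V → G.E
  /-- the direction in which the chosen edge is traversed: `true` means from
  `src` to `tgt` -/
  dir : G.V → Bool
  hsrc : ∀ v, (if dir v then G.src (f v) else G.tgt (f v)) = v
  hinj : Function.Injective f

variable {G : CGraph R}

/-- The successor of a vertex: the other end of its chosen directed edge. -/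
def OCRSF.next (c : G.OCRSF) (v : G.V) : G.V :=
  if c.dir v then G.tgt (c.f v) else G.src (c.f v)

/-- The connection of the directed edge chosen at `v`. -/
def OCRSF.stepConn (c : G.OCRSF) (v : G.V) : Rˣ :=
  if c.dir v then G.conn (c.f v) else (G.conn (c.f v))⁻¹

/-- A vertex lies on a cycle iff it is a periodic point of `next`. -/
def OCRSF.onCycle (c : G.OCRSF) (v : G.V) : Prop :=
  ∃ k, 0 < k ∧ c.next^[k] v = v

open Classical in
/-- The forward orbit of a vertex; for a vertex on a cycle this is the vertex
set of its cycle. -/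
noncomputable def OCRSF.orbit (c : G.OCRSF) (v : G.V) : Finset G.V :=
  Finset.univ.filter fun w => ∃ k : ℕ, c.next^[k] v = w

open Classical in
/-- The cycles of the forest, each recorded by its vertex set. -/
noncomputable def OCRSF.cycles (c : G.OCRSF) : Finset (Finset G.V) :=
  (Finset.univ.filter fun v => c.onCycle v).image c.orbit

/-- The connection of the (oriented) cycle through a vertex `v` lying on a
cycle: the product of the connections of its directed edges, starting at `v`. -/
noncomputable def OCRSF.cycConn (c : G.OCRSF) (v : G.V) : Rˣ :=
  ∏ i ∈ Finset.range (Function.minimalPeriod c.next v), c.stepConn (c.next^[i] v)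

/-- The factor `1 − φ_C` contributed by an oriented cycle with vertex set `s`
(this does not depend on the choice of starting vertex in `s`). -/
noncomputable def OCRSF.cycleTerm (c : G.OCRSF) (s : Finset G.V) : R :=
  if h : s.Nonempty then 1 - (c.cycConn h.choose : R) else 1

/-- The weight of an oriented cycle-rooted spanning forest:
`(Π_e σ_e) · Π_{oriented cycles C} (1 − φ_C)`.  Summing the cycle factors over
the two orientations of each cycle yields Forman's factor `2 − φ_C − φ_C⁻¹`. -/
noncomputable def OCRSF.weight (c : G.OCRSF) : R :=
  (∏ v : G.V, G.sign (c.f v)) * ∏ s ∈ c.cycles, c.cycleTerm s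

open Classical in
noncomputable instance : Fintype G.OCRSF :=
  Fintype.ofInjective (fun c => (c.f, c.dir)) (by
    rintro ⟨f₁, d₁, h₁, i₁⟩ ⟨f₂, d₂, h₂, i₂⟩ h
    simp only [Prod.mk.injEq] at h
    obtain ⟨rfl, rfl⟩ := h
    rfl)

end CGraph


set_option linter.unusedSectionVars false
set_option maxHeartbeats 1000000

open Function Finset Matrix

namespace Forman

variable {R : Type} [CommRing R] {ι : Type} [Fintype ι] [DecidableEq ι]

/-- weighted adjacency matrix of the functional graph of `g`. -/
def pmat (g : ι → ι) (w : ι → R) : Matrix ι ι R :=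
  Matrix.of fun i j => if g i = j then w i else 0

open Classical in
noncomputable def orb (g : ι → ι) (v : ι) : Finset ι :=
  Finset.univ.filter fun x => ∃ k : ℕ, g^[k] v = x

open Classical in
noncomputable def cyc (g : ι → ι) : Finset (Finset ι) :=
  (Finset.univ.filter fun v => ∃ k, 0 < k ∧ g^[k] v = v).image (orb g)

variable {g : ι → ι}

lemma entry_one_sub_pmat (w : ι → R) (i j : ι) :
    (1 - pmat g w) i j = (if i = j then 1 else 0) - (if g i = j then w i else 0) := by
  simp [pmat, Matrix.sub_apply, Matrix.one_apply]

lemma mem_orb {v x : ι} : x ∈ orb g v ↔ ∃ k : ℕ, g^[k] v = x := by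
  classical
  simp [orb]

lemma self_mem_orb (v : ι) : v ∈ orb g v := mem_orb.2 ⟨0, rfl⟩

lemma onCyc_iff {v : ι} : (∃ k, 0 < k ∧ g^[k] v = v) ↔ v ∈ periodicPts g := by
  rw [Function.mem_periodicPts]
  exact exists_congr fun k => by rw [gt_iff_lt]; rfl

lemma mem_cyc {s : Finset ι} :
    s ∈ cyc g ↔ ∃ v, v ∈ periodicPts g ∧ orb g v = s := by
  classical
  simp only [cyc, Finset.mem_image, Finset.mem_filter, Finset.mem_univ, true_and]
  exact exists_congr fun v => by rw [onCyc_iff]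

lemma orb_eq_image {v : ι} (hv : v ∈ periodicPts g) :
    orb g v = (Finset.range (minimalPeriod g v)).image (fun i => g^[i] v) := by
  ext x
  rw [mem_orb, Finset.mem_image]
  constructor
  · rintro ⟨k, rfl⟩
    exact ⟨k % minimalPeriod g v,
      Finset.mem_range.2 (Nat.mod_lt _ (minimalPeriod_pos_of_mem_periodicPts hv)),
      Function.iterate_mod_minimalPeriod_eq⟩
  · rintro ⟨i, _, rfl⟩
    exact ⟨i, rfl⟩

lemma iterate_mem_periodicPts' {v : ι} (hv : v ∈ periodicPts g) (k : ℕ) :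
    g^[k] v ∈ periodicPts g := by
  rcases Function.mem_periodicPts.1 hv with ⟨n, hn, hp⟩
  exact Function.mem_periodicPts.2 ⟨n, hn, (hp.apply_iterate k)⟩

lemma orb_mem_trans {u v x : ι} (hu : u ∈ orb g v) (hx : x ∈ orb g u) : x ∈ orb g v := by
  rcases mem_orb.1 hu with ⟨k, rfl⟩
  rcases mem_orb.1 hx with ⟨m, rfl⟩
  exact mem_orb.2 ⟨m + k, by rw [Function.iterate_add_apply]⟩

lemma mem_orb_self_rev {v u : ι} (hv : v ∈ periodicPts g) (hu : u ∈ orb g v) :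
    v ∈ orb g u := by
  rcases mem_orb.1 hu with ⟨k, rfl⟩
  rcases Function.mem_periodicPts.1 hv with ⟨n, hn, hp⟩
  refine mem_orb.2 ⟨n * (k + 1) - k, ?_⟩
  rw [← Function.iterate_add_apply]
  have h1 : n * (k + 1) - k + k = n * (k + 1) := by
    have : k ≤ n * (k + 1) := by nlinarith
    omega
  rw [h1]
  exact (hp.mul_const (k+1))

lemma orb_eq_of_mem {v u : ι} (hv : v ∈ periodicPts g) (hu : u ∈ orb g v) :
    u ∈ periodicPts g ∧ orb g u = orb g v := by
  constructor
  · rcases mem_orb.1 hu with ⟨k, rfl⟩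
    exact iterate_mem_periodicPts' hv k
  · exact Finset.Subset.antisymm (fun x hx => orb_mem_trans hu hx)
      (fun x hx => orb_mem_trans (mem_orb_self_rev hv hu) hx)

lemma det_cycle_matrix : ∀ (n : ℕ) (u : Fin (n+1) → R),
    (1 - Matrix.of (fun a b : Fin (n+1) => if b = a + 1 then u a else 0)).det
      = 1 - ∏ a, u a := by
  intro n u
  rcases Nat.eq_zero_or_pos n with hn | hn
  · subst hn
    rw [det_fin_one]
    simp [Matrix.sub_apply, Matrix.one_apply]
  set M : Matrix (Fin (n+1)) (Fin (n+1)) R :=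
    1 - Matrix.of (fun a b : Fin (n+1) => if b = a + 1 then u a else 0) with hM
  have hMab : ∀ a b, M a b = (if a = b then 1 else 0) - (if b = a + 1 then u a else 0) := by
    intro a b; simp [hM, Matrix.sub_apply, Matrix.one_apply]
  have hlast0 : (Fin.last n : Fin (n+1)) ≠ 0 := by
    intro h
    have := congrArg Fin.val h
    simp at this
    omega
  have haddone : ∀ a b : Fin (n+1), b = a + 1 ↔ (b.val = a.val + 1 ∨ (a.val = n ∧ b.val = 0)) := by
    intro a b
    have hb := b.isLt
    have ha := a.isLt
    have h1 : (1 : Fin (n+1)).val = 1 := by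
      rw [Fin.val_one']; exact Nat.mod_eq_of_lt (by omega)
    constructor
    · intro h
      have h2 := congrArg Fin.val h
      rw [Fin.val_add, h1] at h2
      rcases Nat.lt_or_ge (a.val + 1) (n+1) with h3 | h3
      · left; rw [h2, Nat.mod_eq_of_lt h3]
      · right
        refine ⟨by omega, ?_⟩
        have ha2 : a.val = n := by omega
        rw [h2, ha2]; simp
    · intro h
      apply Fin.ext
      rw [Fin.val_add, h1]
      rcases h with h | h
      · rw [Nat.mod_eq_of_lt (by omega), h]
      · rw [h.1, h.2]; simp
  rw [Matrix.det_succ_column_zero]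
  rw [Finset.sum_eq_add_of_mem (0 : Fin (n+1)) (Fin.last n) (Finset.mem_univ _)
    (Finset.mem_univ _) (Ne.symm hlast0) ?_]
  · -- main two terms
    have hM00 : M 0 0 = 1 := by
      rw [hMab, if_pos rfl, if_neg, sub_zero]
      rw [haddone]; simp; omega
    have hMl0 : M (Fin.last n) 0 = -u (Fin.last n) := by
      rw [hMab, if_neg hlast0, if_pos ?_]
      · ring
      · rw [haddone]; right; simp
    -- minor at 0 : upper triangular with unit diagonal
    have hminor0 : (M.submatrix (Fin.succAbove 0) Fin.succ).det = 1 := by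
      rw [Matrix.det_of_upperTriangular]
      · apply Finset.prod_eq_one
        intro a _
        rw [Matrix.submatrix_apply, Fin.succAbove_zero, hMab, if_pos rfl, if_neg, sub_zero]
        rw [haddone]
        have := a.isLt
        simp [Fin.val_succ]
      · intro a b hba
        have hba' : (b:ℕ) < a := hba
        have hbl := b.isLt
        rw [Matrix.submatrix_apply, Fin.succAbove_zero, hMab, if_neg, if_neg]
        · ring
        · rw [haddone]
          simp [Fin.val_succ]
          omega
        · intro h
          have := congrArg Fin.val h
          simp [Fin.val_succ] at this
          omega
    -- minor at last : lower triangular with diagonal -u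
    have hminorl : (M.submatrix (Fin.succAbove (Fin.last n)) Fin.succ).det
        = ∏ a : Fin n, -u a.castSucc := by
      rw [Matrix.det_of_lowerTriangular]
      · apply Finset.prod_congr rfl
        intro a _
        rw [Matrix.submatrix_apply, Fin.succAbove_last, hMab, if_neg, if_pos]
        · ring
        · rw [haddone]; left; simp
        · intro h
          have := congrArg Fin.val h
          simp at this
      · intro a b hab
        have hab' : (a:ℕ) < b := hab
        have hal := a.isLt
        rw [Matrix.submatrix_apply, Fin.succAbove_last, hMab, if_neg, if_neg]
        · ring
        · rw [haddone]
          simp [Fin.val_succ, Fin.coe_castSucc]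
          omega
        · intro h
          have := congrArg Fin.val h
          simp [Fin.val_succ, Fin.coe_castSucc] at this
          omega
    rw [hM00, hminor0, hMl0, hminorl]
    simp only [Fin.val_zero, pow_zero, Fin.val_last]
    have hp : (∏ a : Fin n, -u a.castSucc) = (-1:R)^n * ∏ a : Fin n, u a.castSucc := by
      rw [show (fun a : Fin n => -u a.castSucc) = fun a => (-1) * u a.castSucc from
        funext fun a => by ring]
      rw [Finset.prod_mul_distrib, Finset.prod_const]
      simp
    rw [hp, Fin.prod_univ_castSucc (f := u)]
    have hsq : (-1:R)^n * (-1)^n = 1 := by rw [← mul_pow]; simp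
    linear_combination (-u (Fin.last n) * ∏ a : Fin n, u a.castSucc) * hsq
  · -- other terms vanish
    intro c _ hc
    have h1 : M c 0 = 0 := by
      rw [hMab, if_neg hc.1, if_neg ?_]
      · ring
      · rw [haddone]
        simp
        intro h
        exact absurd (Fin.ext (by simp [h]) : c = Fin.last n) hc.2
    rw [h1]; ring
lemma det_cycle_block (w : ι → R) {v₀ : ι} (hv : v₀ ∈ periodicPts g) :
    (Matrix.of fun i j : {x // x ∈ orb g v₀} =>
      (if i = j then (1:R) else 0) - (if g i.val = j.val then w i.val else 0)).det
    = 1 - ∏ x ∈ orb g v₀, w x := by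
  have hpos := minimalPeriod_pos_of_mem_periodicPts hv
  obtain ⟨m, hm⟩ : ∃ m, minimalPeriod g v₀ = m + 1 := ⟨minimalPeriod g v₀ - 1, by omega⟩
  have hbij : Function.Bijective (fun i : Fin (m+1) =>
      (⟨g^[i.val] v₀, mem_orb.2 ⟨i.val, rfl⟩⟩ : {x // x ∈ orb g v₀})) := by
    constructor
    · intro a b hab
      have hab' : g^[a.val] v₀ = g^[b.val] v₀ := congrArg Subtype.val hab
      have := Function.iterate_injOn_Iio_minimalPeriod (f := g) (x := v₀)
        (Set.mem_Iio.2 (by rw [hm]; exact a.isLt))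
        (Set.mem_Iio.2 (by rw [hm]; exact b.isLt)) hab'
      exact Fin.ext this
    · rintro ⟨x, hx⟩
      rcases mem_orb.1 hx with ⟨k, rfl⟩
      refine ⟨⟨k % (m+1), Nat.mod_lt _ (by omega)⟩, Subtype.ext ?_⟩
      show g^[k % (m+1)] v₀ = g^[k] v₀
      rw [← hm]
      exact Function.iterate_mod_minimalPeriod_eq
  set e : Fin (m+1) ≃ {x // x ∈ orb g v₀} := Equiv.ofBijective _ hbij with he
  rw [← Matrix.det_submatrix_equiv_self e]
  have hstep : ∀ a : Fin (m+1), g ((e a).val) = (e (a + 1)).val := by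
    intro a
    have hval : (a + 1 : Fin (m+1)).val = (a.val + 1) % (m+1) := by
      rw [Fin.val_add, Fin.val_one']
      conv_rhs => rw [Nat.add_mod, Nat.mod_eq_of_lt a.isLt]
    show g (g^[a.val] v₀) = g^[((a+1 : Fin (m+1))).val] v₀
    rw [hval, ← Function.iterate_succ_apply' g a.val v₀]
    have h3 := Function.iterate_mod_minimalPeriod_eq (f := g) (x := v₀) (n := a.val + 1)
    rw [hm] at h3
    exact h3.symm
  have hmat : (Matrix.of fun i j : {x // x ∈ orb g v₀} =>
      (if i = j then (1:R) else 0) - (if g i.val = j.val then w i.val else 0)).submatrix e e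
      = 1 - Matrix.of (fun a b : Fin (m+1) => if b = a + 1 then w ((e a).val) else 0) := by
    ext a b
    simp only [Matrix.submatrix_apply, Matrix.sub_apply, Matrix.one_apply, Matrix.of_apply]
    have h1 : (e a = e b) ↔ a = b := Equiv.apply_eq_iff_eq e
    have h2 : (g (e a).val = (e b).val) ↔ b = a + 1 := by
      rw [hstep a, Subtype.coe_inj, Equiv.apply_eq_iff_eq]
      exact eq_comm
    rw [if_congr h1 rfl rfl, if_congr h2 rfl rfl]
  rw [hmat, det_cycle_matrix]
  congr 1
  rw [← Finset.prod_coe_sort (orb g v₀) w]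
  exact Equiv.prod_comp e (fun x => w x.val)
theorem det_one_sub_pmat (g : ι → ι) (w : ι → R) :
    (1 - pmat g w).det = ∏ s ∈ cyc g, (1 - ∏ x ∈ s, w x) := by
  classical
  rcases isEmpty_or_nonempty ι with hι | hι
  · have h1 : cyc g = ∅ := by
      rw [Finset.eq_empty_iff_forall_notMem]
      intro s hs
      rcases mem_cyc.1 hs with ⟨v, _, _⟩
      exact hι.elim v
    rw [h1]
    simp [Matrix.det_isEmpty]
  set N := Fintype.card ι with hNdef
  have hN : 0 < N := Fintype.card_pos
  -- every vertex reaches a periodic point in < N steps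
  have hreach : ∀ v : ι, ∃ k, k < N ∧ g^[k] v ∈ periodicPts g := by
    intro v
    have hninj : ¬ Function.Injective (fun i : Fin (N+1) => g^[i.val] v) := by
      intro hinj
      have := Fintype.card_le_of_injective _ hinj
      simp only [Fintype.card_fin] at this
      omega
    rw [Function.not_injective_iff] at hninj
    obtain ⟨i, j, hij, hne⟩ := hninj
    rcases Ne.lt_or_gt (fun h : i.val = j.val => hne (Fin.ext h)) with hlt | hlt
    · refine ⟨i.val, by omega, ?_⟩
      · have hjl := j.isLt
        refine Function.mem_periodicPts.2 ⟨j.val - i.val, by omega, ?_⟩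
        show g^[j.val - i.val] (g^[i.val] v) = g^[i.val] v
        rw [← Function.iterate_add_apply, Nat.sub_add_cancel (le_of_lt hlt)]
        exact hij.symm
    · refine ⟨j.val, by omega, ?_⟩
      · have hil := i.isLt
        refine Function.mem_periodicPts.2 ⟨i.val - j.val, by omega, ?_⟩
        show g^[i.val - j.val] (g^[j.val] v) = g^[j.val] v
        rw [← Function.iterate_add_apply, Nat.sub_add_cancel (le_of_lt hlt)]
        exact hij
  have hex : ∀ v : ι, ∃ k, g^[k] v ∈ periodicPts g :=
    fun v => (hreach v).imp fun k hk => hk.2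
  set dist : ι → ℕ := fun v => Nat.find (hex v) with hdist
  have hdspec : ∀ v, g^[dist v] v ∈ periodicPts g := fun v => Nat.find_spec (hex v)
  have hdlt : ∀ v, dist v < N := by
    intro v
    obtain ⟨k, hk, hper⟩ := hreach v
    exact lt_of_le_of_lt (Nat.find_min' (hex v) hper) hk
  have hdzero : ∀ v, v ∈ periodicPts g ↔ dist v = 0 := by
    intro v
    constructor
    · intro hv
      exact Nat.eq_zero_of_le_zero (Nat.find_min' (hex v) hv)
    · intro h
      have := hdspec v
      rwa [h] at this
  have hdsucc : ∀ v, v ∉ periodicPts g → dist (g v) = dist v - 1 := by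
    intro v hv
    have h1 : 0 < dist v := by
      rcases Nat.eq_zero_or_pos (dist v) with h | h
      · exact absurd ((hdzero v).2 h) hv
      · exact h
    apply le_antisymm
    · apply Nat.find_min' (hex (g v))
      have := hdspec v
      rwa [show dist v = (dist v - 1) + 1 by omega, Function.iterate_succ_apply] at this
    · have h2 : g^[dist (g v) + 1] v ∈ periodicPts g := by
        rw [Function.iterate_succ_apply]
        exact hdspec (g v)
      have h3 : dist v ≤ dist (g v) + 1 := Nat.find_min' (hex v) h2
      omega
  -- injective labelling of finsets
  set ℓ : Finset ι → ℕ := fun s => ((Fintype.equivFin (Finset ι)) s).val with hℓdef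
  have hℓinj : Function.Injective ℓ := fun s t h =>
    (Fintype.equivFin (Finset ι)).injective (Fin.ext h)
  set b : ι → ℕ := fun v =>
    if v ∈ periodicPts g then N + ℓ (orb g v) else N - dist v with hbdef
  have hb_per : ∀ v, v ∈ periodicPts g → b v = N + ℓ (orb g v) := by
    intro v hv; simp only [hbdef, if_pos hv]
  have hb_off : ∀ v, v ∉ periodicPts g → b v = N - dist v ∧ b v < N := by
    intro v hv
    have h1 : 0 < dist v := by
      rcases Nat.eq_zero_or_pos (dist v) with h | h
      · exact absurd ((hdzero v).2 h) hv
      · exact h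
    constructor
    · simp only [hbdef, if_neg hv]
    · simp only [hbdef, if_neg hv]
      omega
  -- the key no-edge-down property
  have hkey : ∀ i j : ι, g i = j → ¬ (b j < b i) := by
    intro i j hgi hlt
    by_cases hiper : i ∈ periodicPts g
    · have hj : j ∈ orb g i := mem_orb.2 ⟨1, by simpa using hgi⟩
      obtain ⟨hjper, horb⟩ := orb_eq_of_mem hiper hj
      rw [hb_per i hiper, hb_per j hjper, horb] at hlt
      omega
    · obtain ⟨hbi, hbiN⟩ := hb_off i hiper
      by_cases hjper : j ∈ periodicPts g
      · rw [hb_per j hjper] at hlt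
        omega
      · obtain ⟨hbj, _⟩ := hb_off j hjper
        have hdj : dist j = dist i - 1 := by rw [← hgi]; exact hdsucc i hiper
        have h1 : 0 < dist i := by
          rcases Nat.eq_zero_or_pos (dist i) with h | h
          · exact absurd ((hdzero i).2 h) hiper
          · exact h
        have h2 := hdlt i
        rw [hbi, hbj, hdj] at hlt
        omega
  have htri : BlockTriangular (1 - pmat g w) b := by
    intro i j hlt
    rw [entry_one_sub_pmat]
    rw [if_neg (fun h : i = j => by subst h; exact lt_irrefl _ hlt),
       if_neg (fun h => hkey i j h hlt)]
    ring
  rw [htri.det]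
  rw [← Finset.prod_filter_mul_prod_filter_not (Finset.univ.image b) (fun a => N ≤ a)]
  have hlow : ∀ a ∈ (Finset.univ.image b).filter (fun a => ¬ N ≤ a),
      ((1 - pmat g w).toSquareBlock b a).det = 1 := by
    intro a ha
    rw [Finset.mem_filter] at ha
    have haN : a < N := by omega
    have hblock : (1 - pmat g w).toSquareBlock b a = 1 := by
      ext i j
      have hi := i.prop
      have hj := j.prop
      have hiper : (i:ι) ∉ periodicPts g := by
        intro hper
        rw [hb_per _ hper] at hi
        omega
      simp only [Matrix.toSquareBlock_def, Matrix.of_apply]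
      rw [entry_one_sub_pmat]
      by_cases hij : (i:ι) = (j:ι)
      · rw [if_pos hij, if_neg, sub_zero]
        · rw [show i = j from Subtype.ext hij, Matrix.one_apply_eq]
        · intro h
          rw [← hij] at h
          exact hiper (Function.mem_periodicPts.2 ⟨1, one_pos, by simpa [Function.IsPeriodicPt, Function.IsFixedPt] using h⟩)
      · rw [if_neg hij, if_neg, sub_zero]
        · exact (Matrix.one_apply_ne (fun h => hij (congrArg Subtype.val h))).symm
        · intro h
          have hjper : (j:ι) ∉ periodicPts g := by
            intro hper
            rw [hb_per _ hper] at hj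
            omega
          have hdj : dist (j:ι) = dist (i:ι) - 1 := by rw [← h]; exact hdsucc _ hiper
          have h1 : 0 < dist (i:ι) := by
            rcases Nat.eq_zero_or_pos (dist (i:ι)) with h' | h'
            · exact absurd ((hdzero _).2 h') hiper
            · exact h'
          have h2 := hdlt (i:ι)
          obtain ⟨hbi, _⟩ := hb_off _ hiper
          obtain ⟨hbj, _⟩ := hb_off _ hjper
          rw [hbi] at hi
          rw [hbj, hdj] at hj
          omega
    rw [hblock, Matrix.det_one]
  rw [Finset.prod_eq_one hlow, mul_one]
  have hset : (Finset.univ.image b).filter (fun a => N ≤ a)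
      = (cyc g).image (fun s => N + ℓ s) := by
    ext a
    simp only [Finset.mem_filter, Finset.mem_image, Finset.mem_univ, true_and]
    constructor
    · rintro ⟨⟨v, rfl⟩, hNa⟩
      by_cases hvper : v ∈ periodicPts g
      · exact ⟨orb g v, mem_cyc.2 ⟨v, hvper, rfl⟩, (hb_per v hvper).symm⟩
      · obtain ⟨_, hlt⟩ := hb_off v hvper
        omega
    · rintro ⟨s, hs, rfl⟩
      obtain ⟨v, hvper, horb⟩ := mem_cyc.1 hs
      refine ⟨⟨v, ?_⟩, Nat.le_add_right _ _⟩
      rw [hb_per v hvper, horb]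
  rw [hset, Finset.prod_image (fun x _ y _ h => hℓinj (by omega))]
  apply Finset.prod_congr rfl
  intro s hs
  obtain ⟨v₀, hvper, horb⟩ := mem_cyc.1 hs
  have hpred : ∀ i, b i = N + ℓ s ↔ i ∈ orb g v₀ := by
    intro i
    constructor
    · intro hi
      have hiper : i ∈ periodicPts g := by
        by_contra hiper
        obtain ⟨_, hlt⟩ := hb_off i hiper
        omega
      rw [hb_per i hiper] at hi
      have : orb g i = s := hℓinj (by omega)
      rw [horb, ← this]
      exact self_mem_orb i
    · intro hi
      obtain ⟨hiper, horbi⟩ := orb_eq_of_mem hvper hi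
      rw [hb_per i hiper, horbi, horb]
  have hconv : (1 - pmat g w).toSquareBlock b (N + ℓ s)
      = (Matrix.of fun i j : {x // x ∈ orb g v₀} =>
        (if i = j then (1:R) else 0) - (if g i.val = j.val then w i.val else 0)).submatrix
        (Equiv.subtypeEquivRight hpred) (Equiv.subtypeEquivRight hpred) := by
    ext i j
    simp only [Matrix.toSquareBlock_def, Matrix.of_apply, Matrix.submatrix_apply,
      Equiv.subtypeEquivRight_apply]
    rw [entry_one_sub_pmat]
    congr 1
    refine if_congr ?_ rfl rfl
    rw [Subtype.ext_iff]
  rw [hconv, Matrix.det_submatrix_equiv_self, det_cycle_block w hvper, horb]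


lemma prod_orb_eq {M : Type} [CommMonoid M] (f : ι → M) {v : ι} (hv : v ∈ periodicPts g) :
    ∏ x ∈ orb g v, f x = ∏ i ∈ Finset.range (minimalPeriod g v), f (g^[i] v) := by
  rw [orb_eq_image hv, Finset.prod_image]
  intro a ha b hb hab
  exact Function.iterate_injOn_Iio_minimalPeriod
    (Set.mem_Iio.2 (Finset.mem_range.1 ha)) (Set.mem_Iio.2 (Finset.mem_range.1 hb)) hab

lemma det_eq_zero_of_rows_proportional {M : Matrix ι ι R} {v u : ι} (hvu : v ≠ u) (c : R)
    (h : M u = c • M v) : M.det = 0 := by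
  have h1 : M = M.updateRow u (c • M v) := by rw [← h, Matrix.updateRow_eq_self]
  rw [h1, Matrix.det_updateRow_smul]
  have h2 : (M.updateRow u (M v)) v = (M.updateRow u (M v)) u := by
    rw [Matrix.updateRow_self, Matrix.updateRow_ne hvu]
  rw [Matrix.det_zero_of_row_eq hvu h2, mul_zero]


end Forman




namespace CGraph

open Function Finset Matrix

variable {R : Type} [CommRing R] {G : CGraph R}

/-- the tail of a directed edge -/
def dTail (G : CGraph R) (d : G.E × Bool) : G.V := if d.2 then G.src d.1 else G.tgt d.1

/-- the head of a directed edge -/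
def dHead (G : CGraph R) (d : G.E × Bool) : G.V := if d.2 then G.tgt d.1 else G.src d.1

/-- the connection of a directed edge -/
def dConn (G : CGraph R) (d : G.E × Bool) : R :=
  if d.2 then (G.conn d.1 : R) else ((G.conn d.1)⁻¹ : Rˣ)

lemma OCRSF.orbit_eq (c : G.OCRSF) (v : G.V) : c.orbit v = Forman.orb c.next v := by
  ext x
  simp [OCRSF.orbit, Forman.orb]

lemma OCRSF.onCycle_iff (c : G.OCRSF) (v : G.V) :
    c.onCycle v ↔ v ∈ Function.periodicPts c.next := by
  rw [← Forman.onCyc_iff]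
  rfl

lemma OCRSF.cycles_eq (c : G.OCRSF) : c.cycles = Forman.cyc c.next := by
  classical
  ext s
  simp only [OCRSF.cycles, Forman.cyc, Finset.mem_image, Finset.mem_filter, Finset.mem_univ,
    true_and]
  constructor
  · rintro ⟨v, hv, rfl⟩
    exact ⟨v, hv, (c.orbit_eq v).symm⟩
  · rintro ⟨v, hv, rfl⟩
    exact ⟨v, hv, c.orbit_eq v⟩

lemma OCRSF.cycleTerm_eq (c : G.OCRSF) {s : Finset G.V} (hs : s ∈ c.cycles) :
    c.cycleTerm s = 1 - ∏ x ∈ s, (c.stepConn x : R) := by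
  rw [c.cycles_eq] at hs
  obtain ⟨v, hvper, horb⟩ := Forman.mem_cyc.1 hs
  have hne : s.Nonempty := ⟨v, by rw [← horb]; exact Forman.self_mem_orb v⟩
  rw [OCRSF.cycleTerm, dif_pos hne]
  have hus : hne.choose ∈ s := hne.choose_spec
  have hu2 := Forman.orb_eq_of_mem hvper (by rw [horb]; exact hus)
  have horbu : Forman.orb c.next hne.choose = s := hu2.2.trans horb
  have hcast : ((c.cycConn hne.choose : Rˣ) : R)
      = ∏ i ∈ Finset.range (minimalPeriod c.next hne.choose),
          (c.stepConn (c.next^[i] hne.choose) : R) := by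
    rw [OCRSF.cycConn]
    exact map_prod (Units.coeHom R) _ _
  rw [hcast, ← Forman.prod_orb_eq (fun x => (c.stepConn x : R)) hu2.1, horbu]

end CGraph


/-- Forman's theorem: the Laplacian determinant of `G` is the sum over all
cycle-rooted spanning forests `F` of `G` of
`(Π_{e ∈ E_F} σ_e) · Π_{cycles C of F} (2 − φ_C − φ_C⁻¹)`; here each
unoriented forest is counted through its `2^{#cycles}` cycle orientations, an
oriented cycle `C` contributing `1 − φ_C`. -/

theorem lapDet_eq_sum_ocrsf {R : Type} [CommRing R] (G : CGraph R)
    (hsign : ∀ e, G.sign e = 1 ∨ G.sign e = -1) :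
    G.lapDet = ∑ c : G.OCRSF, c.weight := by
  classical
  open Function Finset Matrix CGraph in
  set A : G.V → Finset (G.E × Bool) :=
    fun i => Finset.univ.filter (fun d => dTail G d = i) with hA
  set gf : G.V → (G.E × Bool) → (G.V → R) := fun i d => fun j =>
    G.sign d.1 * ((if i = j then 1 else 0) - (if dHead G d = j then dConn G d else 0)) with hgf
  have hmemA : ∀ (r : (i : G.V) → G.E × Bool), r ∈ Fintype.piFinset A →
      ∀ i, dTail G (r i) = i := by
    intro r hr i
    have := Fintype.mem_piFinset.1 hr i
    rw [hA, Finset.mem_filter] at this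
    exact this.2
  -- Step 1: rows of the Laplacian decompose over directed edges
  have hlap : ∀ i j, G.lap i j = ∑ d ∈ A i, gf i d j := by
    intro i j
    have hrhs : ∑ d ∈ A i, gf i d j = ∑ e : G.E,
        ((if G.src e = i then
            G.sign e * ((if i = j then 1 else 0) - (if G.tgt e = j then (G.conn e : R) else 0))
          else 0)
        + (if G.tgt e = i then
            G.sign e * ((if i = j then 1 else 0)
              - (if G.src e = j then (((G.conn e)⁻¹ : Rˣ) : R) else 0))
          else 0)) := by
      rw [hA, Finset.sum_filter, Fintype.sum_prod_type]
      apply Finset.sum_congr rfl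
      intro e _
      rw [Fintype.sum_bool]
      simp [hgf, dTail, dHead, dConn]
    rw [hrhs, CGraph.lap, Matrix.sub_apply, Matrix.diagonal_apply, CGraph.adj]
    have hdiag : (if i = j then G.deg i else 0) = ∑ e : G.E,
        (if i = j then G.sign e * ((if G.src e = i then 1 else 0)
          + (if G.tgt e = i then 1 else 0)) else 0) := by
      split_ifs with h
      · rw [CGraph.deg]
      · rw [Finset.sum_const_zero]
    rw [hdiag, ← Finset.sum_sub_distrib]
    apply Finset.sum_congr rfl
    intro e _
    simp only [ite_and]
    split_ifs <;> simp_all <;> ring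
  -- Step 2: multilinearity of the determinant
  have h1 : G.lapDet = ∑ r ∈ Fintype.piFinset A, (Matrix.of fun i => gf i (r i)).det := by
    rw [CGraph.lapDet]
    have h2 : G.lap = Matrix.of (fun i => ∑ d ∈ A i, gf i d) := by
      ext i j
      rw [hlap i j]
      simp only [Matrix.of_apply, Finset.sum_apply]
    rw [h2]
    exact (Matrix.detRowAlternating :
      (G.V → R) [⋀^G.V]→ₗ[R] R).toMultilinearMap.map_sum_finset (A := A) (g := gf)
  rw [h1, ← Finset.sum_filter_add_sum_filter_not (Fintype.piFinset A)
    (fun r => Function.Injective (fun i => (r i).1))]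
  -- each term is a signed functional-graph determinant
  have hval : ∀ (r : (i : G.V) → G.E × Bool),
      (Matrix.of fun i => gf i (r i)).det
      = (∏ i, G.sign ((r i).1)) *
        (1 - Forman.pmat (fun i => dHead G (r i)) (fun i => dConn G (r i))).det := by
    intro r
    have h3 : (Matrix.of fun i => gf i (r i)) = Matrix.of (fun i j =>
        (fun i' => G.sign ((r i').1)) i *
        ((1 - Forman.pmat (fun i' => dHead G (r i')) (fun i' => dConn G (r i'))) i j)) := by
      ext i j
      simp only [Matrix.of_apply]
      rw [Forman.entry_one_sub_pmat]
    rw [h3, Matrix.det_mul_column]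
  -- non-injective terms vanish
  have hzero : ∑ r ∈ (Fintype.piFinset A).filter
      (fun r => ¬ Function.Injective (fun i => (r i).1)), (Matrix.of fun i => gf i (r i)).det
      = 0 := by
    apply Finset.sum_eq_zero
    intro r hr
    rw [Finset.mem_filter] at hr
    obtain ⟨hrp, hrinj⟩ := hr
    rw [Function.not_injective_iff] at hrinj
    obtain ⟨a, b, hab, hne⟩ := hrinj
    have hd2 : (r a).2 ≠ (r b).2 := by
      intro h
      apply hne
      have hab2 : r a = r b := Prod.ext hab h
      rw [← hmemA r hrp a, ← hmemA r hrp b, hab2]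
    have key : ∀ a b : G.V, a ≠ b → (r a).1 = (r b).1 → (r a).2 = true → (r b).2 = false →
        (1 - Forman.pmat (fun i => dHead G (r i)) (fun i => dConn G (r i))).det = 0 := by
      intro a b hne hab h2a h2b
      have hsa : G.src ((r a).1) = a := by
        have := hmemA r hrp a
        rw [dTail, h2a] at this
        simpa using this
      have htb : G.tgt ((r a).1) = b := by
        have := hmemA r hrp b
        rw [dTail, h2b, ← hab] at this
        simpa using this
      apply Forman.det_eq_zero_of_rows_proportional hne (-(((G.conn ((r a).1))⁻¹ : Rˣ) : R))
      funext j
      have hHa : dHead G (r a) = b := by rw [dHead, h2a]; simpa using htb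
      have hHb : dHead G (r b) = a := by rw [dHead, h2b, ← hab]; simpa using hsa
      have hCa : dConn G (r a) = (G.conn ((r a).1) : R) := by rw [dConn, h2a]; simp
      have hCb : dConn G (r b) = ((G.conn ((r a).1))⁻¹ : Rˣ) := by
        rw [dConn, h2b, ← hab]; simp
      show (1 - Forman.pmat (fun i => dHead G (r i)) (fun i => dConn G (r i))) b j = _
      rw [Pi.smul_apply, smul_eq_mul, Forman.entry_one_sub_pmat, Forman.entry_one_sub_pmat,
        hHa, hHb, hCa, hCb]
      by_cases hja : a = j
      · subst hja
        simp [Ne.symm hne]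
      · by_cases hjb : b = j
        · subst hjb
          have hu : (((G.conn ((r a).1))⁻¹ : Rˣ) : R) * ((G.conn ((r a).1) : Rˣ) : R) = 1 :=
            Units.inv_mul _
          simp only [if_pos rfl, if_neg hja, ite_true, if_true]
          linear_combination (-1 : R) * hu
        · simp [hja, hjb]
    rw [hval r]
    by_cases h2a : (r a).2 = true
    · have h2b : (r b).2 = false := by
        cases h : (r b).2
        · rfl
        · exact absurd (h2a.trans h.symm) hd2
      rw [key a b hne hab h2a h2b, mul_zero]
    · have h2a' : (r a).2 = false := by
        cases h : (r a).2
        · rfl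
        · exact absurd h h2a
      have h2b : (r b).2 = true := by
        cases h : (r b).2
        · exact absurd (h2a'.trans h.symm) hd2
        · rfl
      rw [key b a (Ne.symm hne) hab.symm h2b h2a', mul_zero]
  rw [hzero, add_zero]
  -- the injective terms biject with OCRSFs
  refine Finset.sum_bij'
    (fun (r : (i : G.V) → G.E × Bool) (hr : r ∈ (Fintype.piFinset A).filter
        (fun r => Function.Injective (fun i => (r i).1))) =>
      (⟨fun v => (r v).1, fun v => (r v).2,
        fun v => hmemA r (Finset.mem_filter.1 hr).1 v,
        (Finset.mem_filter.1 hr).2⟩ : G.OCRSF))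
    (fun c _ => fun v => (c.f v, c.dir v)) ?_ ?_ ?_ ?_ ?_
  · intro r hr
    exact Finset.mem_univ _
  · intro c _
    rw [Finset.mem_filter]
    constructor
    · rw [Fintype.mem_piFinset]
      intro i
      rw [hA, Finset.mem_filter]
      exact ⟨Finset.mem_univ _, c.hsrc i⟩
    · exact c.hinj
  · intro r hr
    funext v
    rfl
  · intro c _
    rfl
  · intro r hr
    rw [hval r]
    set c : G.OCRSF := ⟨fun v => (r v).1, fun v => (r v).2,
      fun v => hmemA r (Finset.mem_filter.1 hr).1 v, (Finset.mem_filter.1 hr).2⟩ with hc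
    have hnext : (fun i => dHead G (r i)) = c.next := rfl
    have hwt : (fun i => dConn G (r i)) = fun i => (c.stepConn i : R) := by
      funext i
      rw [OCRSF.stepConn, dConn, apply_ite (fun u : Rˣ => (u : R))]
    rw [hnext, hwt, Forman.det_one_sub_pmat]
    rw [OCRSF.weight, ← c.cycles_eq]
    congr 1
    apply Finset.prod_congr rfl
    intro s hs
    rw [c.cycleTerm_eq hs]
end
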